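/- Dhar algorithm exhausts the graph for reduced divisors: Let W ⊆ V be a nonempty set of vertices of a connected weightless loopless multigraph G and let d be a W-reduced divisor. If n is such that the Dhar sequence with V₀ = W satisfies V_{n+1} = V_n, then V_n = V. -/

import Mathlib

open Finset

section Preliminaries

variable {V : Type} [Fintype V] [DecidableEq V]

/-- The degree of a divisor on a graph with vertex set `V`. -/
def degDiv (d : V → ℤ) : ℤ := ∑ v, d v

/-- A divisor is effective if it is nonnegative at every vertex. -/
def Effective (d : V → ℤ) : Prop := ∀ v, 0 ≤ d v

/-- The principal divisor `t_Z` associated to a subset `Z` of vertices, for the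
graph with edge multiplicity function `m`. -/
def tZ (m : V → V → ℕ) (Z : Finset V) : V → ℤ := fun v =>
  if v ∈ Z then -(∑ u ∈ Zᶜ, (m v u : ℤ)) else ∑ u ∈ Z, (m v u : ℤ)

/-- Two divisors are linearly equivalent if their difference lies in the subgroup
generated by the divisors `t_Z`. -/
def LinEquiv (m : V → V → ℕ) (d d' : V → ℤ) : Prop :=
  d - d' ∈ AddSubgroup.closure (Set.range (tZ m))

/-- The simple graph associated to an edge multiplicity function `m`
(an edge between distinct `u`, `v` whenever `m u v > 0`; loops are discarded). -/
def assocGraph (m : V → V → ℕ) : SimpleGraph V where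
  Adj u v := u ≠ v ∧ (0 < m u v ∨ 0 < m v u)
  symm := ⟨fun _ _ h => ⟨h.1.symm, h.2.symm⟩⟩
  loopless := ⟨fun _ h => h.1 rfl⟩

end Preliminaries

section Dhar

variable {V : Type} [Fintype V] [DecidableEq V]

/-- One step of the Dhar algorithm: add to `S` all vertices `v ∉ S` with
`∑_{u ∈ S} m v u > d v`. -/
def dharStep (m : V → V → ℕ) (d : V → ℤ) (S : Finset V) : Finset V :=
  S ∪ (Sᶜ.filter fun v => d v < ∑ u ∈ S, (m v u : ℤ))

/-- The Dhar sequence `V₀ ⊆ V₁ ⊆ V₂ ⊆ …` starting from `V₀`. -/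
def dharSeq (m : V → V → ℕ) (d : V → ℤ) (V0 : Finset V) : ℕ → Finset V
  | 0 => V0
  | n + 1 => dharStep m d (dharSeq m d V0 n)

end Dhar

section Reduced

variable {V : Type} [Fintype V] [DecidableEq V]

/-- A divisor `d` is `W`-reduced if it is nonnegative away from `W`, and every
nonempty subset `A` of `V \ W` contains a vertex `v` with
`d v < ∑_{u ∉ A} m v u`. -/
def WReduced (m : V → V → ℕ) (W : Finset V) (d : V → ℤ) : Prop :=
  (∀ v, v ∉ W → 0 ≤ d v) ∧
    ∀ A : Finset V, A.Nonempty → (∀ v ∈ A, v ∉ W) →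
      ∃ v ∈ A, d v < ∑ u ∈ Aᶜ, (m v u : ℤ)

end Reduced

/-- **The Dhar algorithm exhausts the graph for reduced divisors.** -/
theorem dhar_exhausts_reduced {V : Type} [Fintype V] [DecidableEq V]
    (m : V → V → ℕ) (hsymm : ∀ u v, m u v = m v u) (hloop : ∀ v, m v v = 0)
    (hconn : (assocGraph m).Connected)
    (W : Finset V) (hW : W.Nonempty) (d : V → ℤ) (hred : WReduced m W d)
    (n : ℕ) (hstab : dharSeq m d W (n + 1) = dharSeq m d W n) :
    dharSeq m d W n = univ := by
  set S := dharSeq m d W n with hS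
  have hWS : W ⊆ S := by
    rw [hS]; clear hstab hS
    induction n with
    | zero => exact subset_rfl
    | succ k ih => exact ih.trans (subset_union_left)
  by_contra hne
  have hA : Sᶜ.Nonempty := by
    rw [Finset.nonempty_iff_ne_empty]
    intro h
    exact hne (by simpa [Finset.compl_eq_empty_iff] using h)
  obtain ⟨v, hvA, hvlt⟩ := hred.2 Sᶜ hA (fun v hv => fun hvW =>
    (Finset.mem_compl.mp hv) (hWS hvW))
  rw [compl_compl] at hvlt
  have : v ∈ dharSeq m d W (n + 1) := by
    simp only [dharSeq, dharStep, Finset.mem_union, Finset.mem_filter]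
    exact Or.inr ⟨hvA, hvlt⟩
  rw [hstab] at this
  exact (Finset.mem_compl.mp hvA) this
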